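/- Let N ≥ 1, k ≥ 2, and let Ω ⊆ ℝ^N be a measurable set of finite Lebesgue measure |Ω|. For each i = 1,…,k let F_i : ℝ → ℝ be continuous with F_i(0) = 0 and satisfying (F2) with constant A_i > 0, and let F̃_i, G_i be the associated truncations. Then for every κ ≥ 0 and every k-tuple U = (u_1,…,u_k) of differentiable functions u_i : ℝ^N → ℝ with |∇u_i|², u_i², F̃_i(u_i), and G_i(u_i)·G_j(u_j) integrable on Ω, one has I_κ(U) ≥ Σ_{i=1}^k (A_i²/2 − F_i(A_i))·|Ω|. -/

import Mathlib

open MeasureTheory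

/-- The truncated potential `F̃`. -/
noncomputable def truncPotential (F : ℝ → ℝ) (A : ℝ) (t : ℝ) : ℝ :=
  if t ≤ 0 then 0 else if t ≤ A then F t else A * t + F A - A ^ 2

/-- The truncated coupling `G`. -/
noncomputable def truncCoupling (A : ℝ) (t : ℝ) : ℝ :=
  if |t| ≤ A then t ^ 2 else 2 * A * |t| - A ^ 2

lemma truncCoupling_nonneg {A : ℝ} (hA : 0 ≤ A) (t : ℝ) : 0 ≤ truncCoupling A t := by
  unfold truncCoupling
  split_ifs with h
  · positivity
  · nlinarith [abs_nonneg t, not_le.mp h]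

lemma truncPotential_le {F : ℝ → ℝ} {A : ℝ} (hA : 0 < A) (hF0 : F 0 = 0)
    (hF2 : ∀ t : ℝ, 0 ≤ t → F t - t ^ 2 / 2 ≤ F A - A ^ 2 / 2) (t : ℝ) :
    truncPotential F A t - t ^ 2 / 2 ≤ F A - A ^ 2 / 2 := by
  have h0 : (0:ℝ) ≤ F A - A ^ 2 / 2 := by
    have := hF2 0 le_rfl; simp [hF0] at this; linarith
  unfold truncPotential
  split_ifs with h1 h2
  · nlinarith
  · exact hF2 t (le_of_not_ge h1)
  · nlinarith [sq_nonneg (t - A)]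

theorem stmt_9
    {N k : ℕ} (hN : 1 ≤ N) (hk : 2 ≤ k)
    (Ω : Set (EuclideanSpace ℝ (Fin N))) (hΩ : MeasurableSet Ω)
    (hΩfin : volume Ω < ⊤)
    (F : Fin k → ℝ → ℝ) (hFcont : ∀ i, Continuous (F i))
    (hF0 : ∀ i, F i 0 = 0)
    (A : Fin k → ℝ) (hA : ∀ i, 0 < A i)
    (hF2 : ∀ i, ∀ t : ℝ, 0 ≤ t → F i t - t ^ 2 / 2 ≤ F i (A i) - (A i) ^ 2 / 2)
    (κ : ℝ) (hκ : 0 ≤ κ)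
    (u : Fin k → EuclideanSpace ℝ (Fin N) → ℝ)
    (hu : ∀ i, Differentiable ℝ (u i))
    (hgradint : ∀ i, IntegrableOn (fun x => ‖fderiv ℝ (u i) x‖ ^ 2) Ω)
    (husqint : ∀ i, IntegrableOn (fun x => (u i x) ^ 2) Ω)
    (hFtint : ∀ i, IntegrableOn (fun x => truncPotential (F i) (A i) (u i x)) Ω)
    (hGint : ∀ i j, i ≠ j →
      IntegrableOn
        (fun x => truncCoupling (A i) (u i x) * truncCoupling (A j) (u j x)) Ω) :
    (∑ i, ((A i) ^ 2 / 2 - F i (A i))) * (volume Ω).toReal ≤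
      (∑ i, ∫ x in Ω,
          (1 / 2 * ‖fderiv ℝ (u i) x‖ ^ 2 + 1 / 2 * (u i x) ^ 2
            - truncPotential (F i) (A i) (u i x)))
        + κ * ∑ i, ∑ j ∈ Finset.univ.erase i, ∫ x in Ω,
            truncCoupling (A i) (u i x) * truncCoupling (A j) (u j x) := by
  have hcoup : 0 ≤ κ * ∑ i, ∑ j ∈ Finset.univ.erase i, ∫ x in Ω,
      truncCoupling (A i) (u i x) * truncCoupling (A j) (u j x) := by
    apply mul_nonneg hκ
    apply Finset.sum_nonneg; intro i _
    apply Finset.sum_nonneg; intro j _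
    apply setIntegral_nonneg hΩ
    intro x _
    exact mul_nonneg (truncCoupling_nonneg (hA i).le _) (truncCoupling_nonneg (hA j).le _)
  have hmain : (∑ i, ((A i) ^ 2 / 2 - F i (A i))) * (volume Ω).toReal ≤
      ∑ i, ∫ x in Ω, (1 / 2 * ‖fderiv ℝ (u i) x‖ ^ 2 + 1 / 2 * (u i x) ^ 2
            - truncPotential (F i) (A i) (u i x)) := by
    rw [Finset.sum_mul]
    apply Finset.sum_le_sum
    intro i _
    have hconst : ((A i) ^ 2 / 2 - F i (A i)) * (volume Ω).toReal =
        ∫ _x in Ω, ((A i) ^ 2 / 2 - F i (A i)) := by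
      rw [setIntegral_const, smul_eq_mul, mul_comm]; rfl
    rw [hconst]
    apply setIntegral_mono_on
    · exact integrableOn_const hΩfin.ne
    · exact (((hgradint i).const_mul (1/2)).add ((husqint i).const_mul (1/2))).sub (hFtint i)
    · exact hΩ
    · intro x _
      have h1 := truncPotential_le (hA i) (hF0 i) (hF2 i) (u i x)
      have h2 : (0:ℝ) ≤ ‖fderiv ℝ (u i) x‖ ^ 2 := by positivity
      linarith
  linarith
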